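/- arXiv:0906.5177 — 4 statements merged into one kernel-verified Lean document; each statement's English description precedes it below -/
import Mathlib

section
/- If a Laurent polynomial z(q,t) ∈ ℕ[q^{±1}, t^{±1}] admits a decomposition z = q^s(q+q^{-1}) + f_2(q,t)(1+q^4 t) with f_2 ∈ ℕ[q^{±1}, t^{±1}] (i.e., only the k=2 term nonzero), then this decomposition is unique: both s and f_2 are determined by z. -/
open scoped BigOperators

noncomputable section

/-- Laurent polynomials `ℤ[q^{±1}, t^{±1}]` in two variables `q`, `t`,
modelled as the group algebra of `ℤ × ℤ` over `ℤ`. -/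
abbrev L2 : Type := AddMonoidAlgebra ℤ (ℤ × ℤ)

/-- The monomial `c · q^j · t^r`. -/
noncomputable def mono (j r c : ℤ) : L2 := AddMonoidAlgebra.single (j, r) c

/-- The monomial `q^j t^r`. -/
noncomputable def Q (j r : ℤ) : L2 := AddMonoidAlgebra.single (j, r) 1

/-- A Laurent polynomial lies in `ℕ[q^{±1}, t^{±1}]`: all coefficients are non-negative. -/
def IsNonneg (f : L2) : Prop := ∀ m : ℤ × ℤ, 0 ≤ f.coeff m

/-- A `1`-decomposition of `z`:
`z = q^s (q + q^{-1}) + Σ_{k ≥ 2} f_k (1 + q^{2k} t)` with each `f_k ∈ ℕ[q^{±1}, t^{±1}]`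
and only finitely many `f_k` nonzero. -/
def OneDecomp (z : L2) (s : ℤ) (f : ℕ → L2) : Prop :=
  (Function.support f).Finite ∧ (∀ k, IsNonneg (f k)) ∧ (∀ k, k < 2 → f k = 0) ∧
    z = Q s 0 * (Q 1 0 + Q (-1) 0) + ∑ᶠ k : ℕ, f k * (1 + Q (2 * (k : ℤ)) 1)

/-- A `0`-decomposition of `z`: as a `1`-decomposition but without the `q^s(q+q^{-1})` term. -/
def ZeroDecomp (z : L2) (f : ℕ → L2) : Prop :=
  (Function.support f).Finite ∧ (∀ k, IsNonneg (f k)) ∧ (∀ k, k < 2 → f k = 0) ∧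
    z = ∑ᶠ k : ℕ, f k * (1 + Q (2 * (k : ℤ)) 1)

lemma apply_helper (a b c d : L2) (m : ℤ × ℤ) :
    (a + b - (c + d)).coeff m = a.coeff m + b.coeff m - (c.coeff m + d.coeff m) := rfl

lemma coeff_mul_B (g : L2) (m : ℤ × ℤ) :
    (g * (1 + Q 4 1)).coeff m = g.coeff m + g.coeff (m - ((4 : ℤ), (1 : ℤ))) := by
  rw [mul_add, mul_one, AddMonoidAlgebra.coeff_add, Finsupp.add_apply, Q, AddMonoidAlgebra.coeff_mul_single_apply, mul_one, sub_eq_add_neg]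

lemma QA_eq (s : ℤ) : Q s 0 * (Q 1 0 + Q (-1) 0)
    = AddMonoidAlgebra.single ((s + 1 : ℤ), (0:ℤ)) (1:ℤ)
    + AddMonoidAlgebra.single ((s - 1 : ℤ), (0:ℤ)) (1:ℤ) := by
  simp only [Q, mul_add, AddMonoidAlgebra.single_mul_single, mul_one, Prod.mk_add_mk]
  rw [sub_eq_add_neg]; norm_num

/-- If `z ∈ ℕ[q^{±1}, t^{±1}]` admits a decomposition `z = q^s(q+q^{-1}) + f₂ (1 + q^4 t)`
with `f₂ ∈ ℕ[q^{±1}, t^{±1}]` (only the `k = 2` term nonzero), then `s` and `f₂`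
are uniquely determined by `z`. -/
theorem onlyF2_decomposition_unique (z : L2) (hz : IsNonneg z)
    (s s' : ℤ) (f₂ f₂' : L2) (hf : IsNonneg f₂) (hf' : IsNonneg f₂')
    (h : z = Q s 0 * (Q 1 0 + Q (-1) 0) + f₂ * (1 + Q 4 1))
    (h' : z = Q s' 0 * (Q 1 0 + Q (-1) 0) + f₂' * (1 + Q 4 1)) :
    s = s' ∧ f₂ = f₂' := by
  have E := h.symm.trans h'
  set g : L2 := f₂ - f₂' with hg
  set D : L2 := (AddMonoidAlgebra.single ((s' + 1 : ℤ), (0:ℤ)) (1:ℤ)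
      + AddMonoidAlgebra.single ((s' - 1 : ℤ), (0:ℤ)) (1:ℤ))
      - (AddMonoidAlgebra.single ((s + 1 : ℤ), (0:ℤ)) (1:ℤ)
      + AddMonoidAlgebra.single ((s - 1 : ℤ), (0:ℤ)) (1:ℤ)) with hD
  have hgB : g * (1 + Q 4 1) = D := by
    rw [hD, ← QA_eq, ← QA_eq, hg, sub_mul]
    linear_combination E
  -- coefficient form of the key equation
  have key : ∀ m : ℤ × ℤ, g.coeff m + g.coeff (m - ((4:ℤ),(1:ℤ))) = D.coeff m := by
    intro m
    rw [← coeff_mul_B, hgB]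
  have Dzero : ∀ m : ℤ × ℤ, m.2 ≠ 0 → D.coeff m = 0 := by
    intro m hm
    rw [hD, apply_helper]
    simp only [AddMonoidAlgebra.coeff_single, Finsupp.single_apply]
    rw [if_neg (fun hc => hm (congrArg Prod.snd hc).symm),
      if_neg (fun hc => hm (congrArg Prod.snd hc).symm),
      if_neg (fun hc => hm (congrArg Prod.snd hc).symm),
      if_neg (fun hc => hm (congrArg Prod.snd hc).symm)]
    ring
  -- key at level r ≠ 0
  have key0 : ∀ j r : ℤ, r ≠ 0 → g.coeff (j, r) + g.coeff (j - 4, r - 1) = 0 := by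
    intro j r hr
    have := key (j, r)
    rwa [Dzero (j, r) hr] at this
  -- going up
  have up : ∀ (j r : ℤ), 0 ≤ r → ∀ n : ℕ, g.coeff (j + 4 * n, r + n) = (-1 : ℤ) ^ n * g.coeff (j, r) := by
    intro j r hr n
    induction n with
    | zero => simp
    | succ n ih =>
      have h1 : ((r : ℤ) + (n + 1 : ℕ)) ≠ 0 := by push_cast; omega
      have h2 := key0 (j + 4 * (n + 1 : ℕ)) (r + (n + 1 : ℕ)) h1
      have e1 : (j + 4 * ((n : ℤ) + 1) - 4) = j + 4 * n := by ring
      have e2 : (r + ((n : ℤ) + 1) - 1) = r + n := by ring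
      push_cast at h2 ⊢
      rw [e1, e2] at h2
      rw [ih] at h2
      have : g.coeff (j + 4 * ((n : ℤ) + 1), r + ((n : ℤ) + 1)) = -((-1:ℤ)^n * g.coeff (j, r)) := by
        linarith
      rw [this]; ring
  -- going down
  have down : ∀ (j r : ℤ), r ≤ -1 → ∀ n : ℕ, g.coeff (j - 4 * n, r - n) = (-1 : ℤ) ^ n * g.coeff (j, r) := by
    intro j r hr n
    induction n with
    | zero => simp
    | succ n ih =>
      have h1 : ((r : ℤ) - n) ≠ 0 := by push_cast; omega
      have h2 := key0 (j - 4 * n) (r - n) h1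
      have e1 : (j - 4 * (n:ℤ) - 4) = j - 4 * ((n:ℤ) + 1) := by ring
      have e2 : (r - (n:ℤ) - 1) = r - ((n:ℤ) + 1) := by ring
      rw [e1, e2, ih] at h2
      push_cast
      have : g.coeff (j - 4 * ((n : ℤ) + 1), r - ((n : ℤ) + 1)) = -((-1:ℤ)^n * g.coeff (j, r)) := by
        linarith
      rw [this]; ring
  -- a bound on the t-degrees of the support of g
  obtain ⟨b, hb⟩ : ∃ b : ℤ, ∀ m ∈ g.coeff.support, |m.2| ≤ b := by
    rcases (g.coeff.support.image (fun m : ℤ × ℤ => |m.2|)).exists_le with ⟨b, hb⟩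
    exact ⟨b, fun m hm => hb _ (Finset.mem_image_of_mem _ hm)⟩
  have gzero : g = 0 := by
    ext m
    obtain ⟨j, r⟩ := m
    rcases le_or_gt 0 r with hr | hr
    · by_contra hne
      set n : ℕ := (b + 1).toNat with hn
      have h1 : g.coeff (j + 4 * n, r + n) = (-1:ℤ)^n * g.coeff (j, r) := up j r hr n
      have h2 : g.coeff (j + 4 * n, r + n) ≠ 0 := by
        rw [h1]
        intro hc
        rcases mul_eq_zero.mp hc with hc | hc
        · exact pow_ne_zero n (by norm_num) hc
        · exact hne hc
      have h3 := hb _ (Finsupp.mem_support_iff.mpr h2)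
      simp only at h3
      have h4 : (0:ℤ) ≤ b := le_trans (abs_nonneg _) (hb (j + 4 * n, r + n) (Finsupp.mem_support_iff.mpr h2) |>.trans_eq rfl) |>.trans_eq rfl |>.trans le_rfl
      have h5 : (n : ℤ) = b + 1 := by
        rw [hn]; exact Int.toNat_of_nonneg (by linarith)
      rw [abs_of_nonneg (by omega)] at h3
      omega
    · by_contra hne
      have hr' : r ≤ -1 := by omega
      set n : ℕ := (b + 1).toNat with hn
      have h1 : g.coeff (j - 4 * n, r - n) = (-1:ℤ)^n * g.coeff (j, r) := down j r hr' n
      have h2 : g.coeff (j - 4 * n, r - n) ≠ 0 := by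
        rw [h1]
        intro hc
        rcases mul_eq_zero.mp hc with hc | hc
        · exact pow_ne_zero n (by norm_num) hc
        · exact hne hc
      have h3 := hb _ (Finsupp.mem_support_iff.mpr h2)
      simp only at h3
      have h4 : (0:ℤ) ≤ b := le_trans (abs_nonneg _) h3
      have h5 : (n : ℤ) = b + 1 := by
        rw [hn]; exact Int.toNat_of_nonneg (by linarith)
      rw [abs_of_nonpos (by omega)] at h3
      omega
  have hff : f₂ = f₂' := by
    have := sub_eq_zero.mp gzero
    exact this
  refine ⟨?_, hff⟩
  -- now D = 0, deduce s = s'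
  have hD0 : D = 0 := by
    rw [← hgB, gzero, zero_mul]
  have cc : ∀ m : ℤ × ℤ, D.coeff m = 0 := by
    intro m; rw [hD0]; rfl
  have c1 := cc ((s + 1 : ℤ), (0:ℤ))
  have c2 := cc ((s' + 1 : ℤ), (0:ℤ))
  rw [hD, apply_helper] at c1 c2
  simp only [AddMonoidAlgebra.coeff_single, Finsupp.single_apply, Prod.mk.injEq] at c1 c2
  split_ifs at c1 c2 <;> omega
end
end

section
/- Let z(q,t) ∈ ℕ[q^{±1}, t^{±1}] and write z = Σ_{j,r} a_{j,r} q^j t^r. Every 1-decomposition of z arises as the sum of a 1-decomposition of u(q,t) = Σ_{j, r≥0} a_{j,r} q^j t^r + t^{-1} w(q) and a 0-decomposition of v(q,t) = Σ_{j, r<0} a_{j,r} q^j t^r - t^{-1} w(q), for some Laurent polynomial w ∈ ℕ[q^{±1}] such that v has non-negative coefficients (so v ∈ t^{-1} ℕ[q^{±1}, t^{-1}]). -/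
open scoped BigOperators

noncomputable section

/-- The part of `z` with non-negative `t`-degree. -/
noncomputable def tPos (z : L2) : L2 := AddMonoidAlgebra.ofCoeff (z.coeff.filter (fun m : ℤ × ℤ => 0 ≤ m.2))

/-- The part of `z` with negative `t`-degree. -/
noncomputable def tNeg (z : L2) : L2 := AddMonoidAlgebra.ofCoeff (z.coeff.filter (fun m : ℤ × ℤ => m.2 < 0))

/-- `t^{-1} w(q)` for a one-variable Laurent polynomial `w`. -/
noncomputable def tInvMul (w : AddMonoidAlgebra ℤ ℤ) : L2 :=
  Finsupp.sum w.coeff fun j c => AddMonoidAlgebra.single ((j, -1) : ℤ × ℤ) c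

/-- `w ∈ ℕ[q^{±1}]`. -/
def IsNonneg₁ (w : AddMonoidAlgebra ℤ ℤ) : Prop := ∀ j : ℤ, 0 ≤ w.coeff j

namespace CutAux

/-- The support of `F` satisfies the predicate `p`. -/
def SuppOn (F : L2) (p : ℤ × ℤ → Prop) : Prop := ∀ m, F.coeff m ≠ 0 → p m

lemma suppOn_mono {F : L2} {p q : ℤ × ℤ → Prop} (h : SuppOn F p) (hpq : ∀ m, p m → q m) :
    SuppOn F q := fun m hm => hpq m (h m hm)

lemma suppOn_single (a : ℤ × ℤ) (c : ℤ) :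
    SuppOn (AddMonoidAlgebra.single a c) (fun m => m = a) := by
  intro m hm
  by_contra hma
  exact hm (by rw [AddMonoidAlgebra.coeff_single]; exact Finsupp.single_eq_of_ne' (Ne.symm hma))

lemma suppOn_add {F G : L2} {p : ℤ × ℤ → Prop} (hF : SuppOn F p) (hG : SuppOn G p) :
    SuppOn (F + G) p := by
  intro m hm
  rw [AddMonoidAlgebra.coeff_add, Finsupp.add_apply] at hm
  by_cases h : F.coeff m = 0
  · exact hG m (by simpa [h] using hm)
  · exact hF m h

lemma suppOn_mul {a b : L2} {p q : ℤ × ℤ → Prop} (ha : SuppOn a p) (hb : SuppOn b q) :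
    SuppOn (a * b) (fun m => ∃ x y, p x ∧ q y ∧ m = x + y) := by
  classical
  intro m hm
  have h := AddMonoidAlgebra.support_coeff_mul_subset a b (Finsupp.mem_support_iff.2 hm)
  rw [Finset.mem_add] at h
  obtain ⟨x, hx, y, hy, rfl⟩ := h
  exact ⟨x, y, ha x (Finsupp.mem_support_iff.1 hx), hb y (Finsupp.mem_support_iff.1 hy), rfl⟩

lemma finsum_apply' {F : ℕ → L2} (hfin : (Function.support F).Finite) (m : ℤ × ℤ) :
    (∑ᶠ k, F k).coeff m = ∑ᶠ k, (F k).coeff m :=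
  ((Finsupp.applyAddHom (M := ℤ) m).comp (AddMonoidAlgebra.coeffAddEquiv : L2 ≃+ ((ℤ × ℤ) →₀ ℤ)).toAddMonoidHom).map_finsum hfin

lemma suppOn_finsum {F : ℕ → L2} (hfin : (Function.support F).Finite) {p : ℤ × ℤ → Prop}
    (h : ∀ k, SuppOn (F k) p) : SuppOn (∑ᶠ k, F k) p := by
  intro m hm
  rw [finsum_apply' hfin] at hm
  by_contra hp
  exact hm (finsum_eq_zero_of_forall_eq_zero fun k => by
    by_contra h0
    exact hp (h k m h0))

lemma isNonneg_add {a b : L2} (ha : IsNonneg a) (hb : IsNonneg b) : IsNonneg (a + b) :=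
  fun m => by
    rw [AddMonoidAlgebra.coeff_add, Finsupp.add_apply]
    exact add_nonneg (ha m) (hb m)

lemma isNonneg_single {a : ℤ × ℤ} {c : ℤ} (hc : 0 ≤ c) :
    IsNonneg (AddMonoidAlgebra.single a c) := by
  intro m
  rw [AddMonoidAlgebra.coeff_single, Finsupp.single_apply]
  split <;> simp [hc]

lemma isNonneg_filter (p : ℤ × ℤ → Prop) [DecidablePred p] {a : L2} (ha : IsNonneg a) :
    IsNonneg (AddMonoidAlgebra.ofCoeff (a.coeff.filter p)) := by
  intro m
  rw [AddMonoidAlgebra.coeff_ofCoeff, Finsupp.filter_apply]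
  split
  · exact ha m
  · exact le_refl 0

lemma isNonneg_mul {a b : L2} (ha : IsNonneg a) (hb : IsNonneg b) : IsNonneg (a * b) := by
  classical
  intro m
  rw [AddMonoidAlgebra.coeff_mul]
  refine Finset.sum_nonneg fun x _ => Finset.sum_nonneg fun y _ => ?_
  show 0 ≤ if x + y = m then a.coeff x * b.coeff y else 0
  split
  · exact mul_nonneg (ha x) (hb y)
  · exact le_refl 0

lemma isNonneg_finsum {F : ℕ → L2} (hfin : (Function.support F).Finite)
    (h : ∀ k, IsNonneg (F k)) : IsNonneg (∑ᶠ k, F k) := by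
  intro m
  rw [finsum_apply' hfin]
  exact finsum_nonneg fun k => h k m

lemma suppOn_oneQ (n : ℤ) : SuppOn (1 + Q n 1) (fun m => m.2 = 0 ∨ m.2 = 1) := by
  have h1 : SuppOn (1 : L2) (fun m => m.2 = 0 ∨ m.2 = 1) := by
    refine suppOn_mono (p := fun m => m = ((0, 0) : ℤ × ℤ)) ?_ ?_
    · rw [AddMonoidAlgebra.one_def]
      exact suppOn_single _ _
    · rintro m rfl; exact Or.inl rfl
  have h2 : SuppOn (Q n 1) (fun m => m.2 = 0 ∨ m.2 = 1) := by
    refine suppOn_mono (p := fun m => m = ((n, 1) : ℤ × ℤ)) (suppOn_single _ _) ?_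
    rintro m rfl; exact Or.inr rfl
  exact suppOn_add h1 h2

lemma isNonneg_oneQ (n : ℤ) : IsNonneg (1 + Q n 1) := by
  refine isNonneg_add ?_ (isNonneg_single zero_le_one)
  rw [AddMonoidAlgebra.one_def]
  exact isNonneg_single zero_le_one

/-- If the support satisfies `p`, the filter by `p` is the whole thing. -/
lemma filter_of_suppOn {F : L2} {p : ℤ × ℤ → Prop} [DecidablePred p] (h : SuppOn F p) :
    AddMonoidAlgebra.ofCoeff (F.coeff.filter p) = F :=
  congrArg AddMonoidAlgebra.ofCoeff ((Finsupp.filter_eq_self_iff _ _).2 h)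

lemma filter_eq_zero_of_suppOn {F : L2} {p q : ℤ × ℤ → Prop} [DecidablePred q]
    (h : SuppOn F p) (hpq : ∀ m, p m → ¬ q m) : AddMonoidAlgebra.ofCoeff (F.coeff.filter q) = 0 := by
  rw [← AddMonoidAlgebra.ofCoeff_zero]
  exact congrArg _ ((Finsupp.filter_eq_zero_iff _ _).2 fun m hq => by
    by_contra h0
    exact hpq m (h m h0) hq)

lemma tPos_tNeg (F : L2) : tPos F + tNeg F = F := by
  ext m
  rw [AddMonoidAlgebra.coeff_add, Finsupp.add_apply, tPos, tNeg, AddMonoidAlgebra.coeff_ofCoeff,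
    AddMonoidAlgebra.coeff_ofCoeff, Finsupp.filter_apply, Finsupp.filter_apply]
  by_cases h : (0 : ℤ) ≤ m.2
  · rw [if_pos h, if_neg (not_lt.2 h), add_zero]
  · rw [if_neg h, if_pos (not_le.1 h), zero_add]

end CutAux

open CutAux in
/-- Cutting lemma: every `1`-decomposition of `z ∈ ℕ[q^{±1}, t^{±1}]` arises as the sum of a
`1`-decomposition of `u = (part of z with t-degree ≥ 0) + t^{-1} w(q)` and a `0`-decomposition of
`v = (part of z with t-degree < 0) - t^{-1} w(q)`, for some `w ∈ ℕ[q^{±1}]` with `v` having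
non-negative coefficients. -/
theorem cutting_decompositions (z : L2) (hz : IsNonneg z) (s : ℤ) (f : ℕ → L2)
    (hdec : OneDecomp z s f) :
    ∃ (w : AddMonoidAlgebra ℤ ℤ) (g h : ℕ → L2),
      IsNonneg₁ w ∧
      (∀ k, f k = g k + h k) ∧
      IsNonneg (tNeg z - tInvMul w) ∧
      OneDecomp (tPos z + tInvMul w) s g ∧
      ZeroDecomp (tNeg z - tInvMul w) h := by
  classical
  obtain ⟨hfin, hnn, hlow, hz_eq⟩ := hdec
  -- split each `f k` at `t`-degree `-1`
  set g : ℕ → L2 := fun k => AddMonoidAlgebra.ofCoeff ((f k).coeff.filter (fun m => -1 ≤ m.2)) with hg_def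
  set h : ℕ → L2 := fun k => AddMonoidAlgebra.ofCoeff ((f k).coeff.filter (fun m => ¬ -1 ≤ m.2)) with hh_def
  have hsplit : ∀ k, f k = g k + h k := by
    intro k
    ext m
    rw [AddMonoidAlgebra.coeff_add, Finsupp.add_apply, hg_def, hh_def, AddMonoidAlgebra.coeff_ofCoeff,
      AddMonoidAlgebra.coeff_ofCoeff, Finsupp.filter_apply, Finsupp.filter_apply]
    by_cases hm : (-1 : ℤ) ≤ m.2
    · rw [if_pos hm, if_neg (not_not.2 hm), add_zero]
    · rw [if_neg hm, if_pos hm, zero_add]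
  -- basic properties of `g`, `h`
  have hg_zero : ∀ k, f k = 0 → g k = 0 := by
    intro k hk; rw [hg_def]; simp only [hk, AddMonoidAlgebra.coeff_zero, Finsupp.filter_zero,
      AddMonoidAlgebra.ofCoeff_zero]
  have hh_zero : ∀ k, f k = 0 → h k = 0 := by
    intro k hk; rw [hh_def]; simp only [hk, AddMonoidAlgebra.coeff_zero, Finsupp.filter_zero,
      AddMonoidAlgebra.ofCoeff_zero]
  have hg_fin : (Function.support g).Finite :=
    hfin.subset fun k hk => fun h0 => hk (hg_zero k h0)
  have hh_fin : (Function.support h).Finite :=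
    hfin.subset fun k hk => fun h0 => hk (hh_zero k h0)
  have hg_nn : ∀ k, IsNonneg (g k) := fun k => isNonneg_filter _ (hnn k)
  have hh_nn : ∀ k, IsNonneg (h k) := fun k => isNonneg_filter _ (hnn k)
  have hg_low : ∀ k, k < 2 → g k = 0 := fun k hk => hg_zero k (hlow k hk)
  have hh_low : ∀ k, k < 2 → h k = 0 := fun k hk => hh_zero k (hlow k hk)
  -- the two pieces of the sum
  set X : ℕ → L2 := fun k => 1 + Q (2 * (k : ℤ)) 1 with hX_def
  set G : L2 := ∑ᶠ k : ℕ, g k * X k with hG_def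
  set H : L2 := ∑ᶠ k : ℕ, h k * X k with hH_def
  have hGt_fin : (Function.support fun k => g k * X k).Finite :=
    hg_fin.subset fun k hk h0 => hk (by simp [h0])
  have hHt_fin : (Function.support fun k => h k * X k).Finite :=
    hh_fin.subset fun k hk h0 => hk (by simp [h0])
  have hGH : (∑ᶠ k : ℕ, f k * X k) = G + H := by
    rw [hG_def, hH_def, ← finsum_add_distrib hGt_fin hHt_fin]
    exact finsum_congr fun k => by rw [hsplit k, add_mul]
  set head : L2 := Q s 0 * (Q 1 0 + Q (-1) 0) with hhead_def
  have hz' : z = head + (G + H) := by rw [hz_eq, hGH]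
  -- support bounds
  have hG_supp : SuppOn G (fun m => -1 ≤ m.2) := by
    refine suppOn_finsum hGt_fin fun k => ?_
    refine suppOn_mono (suppOn_mul (p := fun m => -1 ≤ m.2)
      (q := fun m => m.2 = 0 ∨ m.2 = 1) ?_ (suppOn_oneQ _)) ?_
    · intro m hm
      rw [hg_def] at hm
      by_contra hc
      exact hm (Finsupp.filter_apply_neg _ _ hc)
    · rintro m ⟨x, y, hx, hy, rfl⟩
      have : x.2 + y.2 = (x + y).2 := rfl
      rcases hy with hy | hy <;> simp only [Prod.snd_add] <;> omega
  have hH_supp : SuppOn H (fun m => m.2 ≤ -1) := by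
    refine suppOn_finsum hHt_fin fun k => ?_
    refine suppOn_mono (suppOn_mul (p := fun m => m.2 ≤ -2)
      (q := fun m => m.2 = 0 ∨ m.2 = 1) ?_ (suppOn_oneQ _)) ?_
    · intro m hm
      rw [hh_def] at hm
      have : ¬ (-1 : ℤ) ≤ m.2 := by
        by_contra hc
        exact hm (Finsupp.filter_apply_neg _ _ (not_not.2 hc))
      omega
    · rintro m ⟨x, y, hx, hy, rfl⟩
      rcases hy with hy | hy <;> simp only [Prod.snd_add] <;> omega
  have hhead_supp : SuppOn head (fun m => m.2 = 0) := by
    rw [hhead_def]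
    refine suppOn_mono (suppOn_mul (p := fun m => m = ((s, 0) : ℤ × ℤ))
      (q := fun m => m.2 = 0) (suppOn_single _ _) ?_) ?_
    · refine suppOn_add ?_ ?_ <;>
        · refine suppOn_mono (suppOn_single _ _) ?_
          rintro m rfl; rfl
    · rintro m ⟨x, y, rfl, hy, rfl⟩
      simp [Prod.snd_add, hy]
  -- G is non-negative hence so is W := tNeg G
  have hG_nn : IsNonneg G :=
    isNonneg_finsum hGt_fin fun k => isNonneg_mul (hg_nn k) (isNonneg_oneQ _)
  have hH_nn : IsNonneg H :=
    isNonneg_finsum hHt_fin fun k => isNonneg_mul (hh_nn k) (isNonneg_oneQ _)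
  set W : L2 := tNeg G with hW_def
  have hW_nn : IsNonneg W := isNonneg_filter _ hG_nn
  have hW_supp : SuppOn W (fun m => m.2 = -1) := by
    intro m hm
    have h1 : m.2 < 0 := by
      by_contra hc
      exact hm (Finsupp.filter_apply_neg _ _ hc)
    have h2 : -1 ≤ m.2 := by
      refine hG_supp m fun h0 => hm ?_
      rw [hW_def, tNeg, AddMonoidAlgebra.coeff_ofCoeff, Finsupp.filter_apply, h0, if_pos h1]
    omega
  -- realize W as tInvMul w
  have hinj : Function.Injective (fun j : ℤ => ((j, -1) : ℤ × ℤ)) := by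
    intro a b hab
    exact (Prod.ext_iff.1 hab).1
  set w : AddMonoidAlgebra ℤ ℤ := AddMonoidAlgebra.ofCoeff (Finsupp.comapDomain _ W.coeff hinj.injOn) with hw_def
  have hWw : tInvMul w = W := by
    have h1 : tInvMul w =
        AddMonoidAlgebra.ofCoeff (Finsupp.mapDomain (fun j : ℤ => ((j, -1) : ℤ × ℤ)) w.coeff) := by
      apply AddMonoidAlgebra.coeff_injective
      rw [tInvMul, AddMonoidAlgebra.coeff_finsuppSum]
      rfl
    rw [h1, hw_def]
    refine congrArg AddMonoidAlgebra.ofCoeff (Finsupp.mapDomain_comapDomain _ hinj W.coeff ?_)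
    intro m hm
    have := hW_supp m (Finsupp.mem_support_iff.1 hm)
    exact ⟨m.1, by rw [← this]⟩
  have hw_nn : IsNonneg₁ w := by
    intro j
    rw [hw_def, AddMonoidAlgebra.coeff_ofCoeff, Finsupp.comapDomain_apply]
    exact hW_nn _
  -- compute tPos z and tNeg z
  have htPos_z : tPos z = head + tPos G := by
    rw [hz', tPos, AddMonoidAlgebra.coeff_add, AddMonoidAlgebra.coeff_add, Finsupp.filter_add,
      Finsupp.filter_add, AddMonoidAlgebra.ofCoeff_add, AddMonoidAlgebra.ofCoeff_add]
    rw [filter_of_suppOn (suppOn_mono hhead_supp fun m hm => by rw [hm])]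
    rw [filter_eq_zero_of_suppOn hH_supp (fun m hm => by omega)]
    rw [add_zero]
    rfl
  have htNeg_z : tNeg z = W + H := by
    rw [hz', tNeg, AddMonoidAlgebra.coeff_add, AddMonoidAlgebra.coeff_add, Finsupp.filter_add,
      Finsupp.filter_add, AddMonoidAlgebra.ofCoeff_add, AddMonoidAlgebra.ofCoeff_add]
    rw [filter_eq_zero_of_suppOn hhead_supp (fun m hm => by omega)]
    rw [filter_of_suppOn (suppOn_mono hH_supp fun m hm => by omega)]
    rw [zero_add]
    rfl
  refine ⟨w, g, h, hw_nn, hsplit, ?_, ?_, ?_⟩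
  · rw [hWw, htNeg_z, add_sub_cancel_left]
    exact hH_nn
  · refine ⟨hg_fin, hg_nn, hg_low, ?_⟩
    rw [hWw, htPos_z, hW_def, add_assoc, tPos_tNeg, ← hG_def, ← hhead_def]
  · refine ⟨hh_fin, hh_nn, hh_low, ?_⟩
    rw [hWw, htNeg_z, add_sub_cancel_left, hH_def]

end
end

section
/- Let Kh(q,t) be the explicit Khovanov polynomial of K₂ from the paper, and define D(q,t) = Kh(q,t) − (q + q^{-1}). Then D(q,t) is divisible by (1 + q^4 t) in ℤ[q^{±1}, t^{±1}], and the quotient f_2(q,t) = D(q,t)/(1+q^4 t) has non-negative integer coefficients. In particular Kh admits a 1-decomposition with s = 0 and only f_2 nonzero. -/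
open scoped BigOperators

noncomputable section

/-- The Khovanov polynomial of the knot `K₂` (Equation (2) of the paper). -/
noncomputable def KhK2 : L2 :=
    mono (-45) (-32) (1) + mono (-41) (-31) (1) + mono (-39) (-29) (1) +
    mono (-35) (-28) (1) + mono (-37) (-27) (1) + mono (-37) (-26) (1) +
    mono (-33) (-26) (1) + mono (-35) (-25) (1) + mono (-33) (-25) (1) +
    mono (-35) (-24) (1) + mono (-31) (-24) (2) + mono (-33) (-23) (1) +
    mono (-31) (-23) (2) + mono (-27) (-23) (1) + mono (-33) (-22) (1) +
    mono (-29) (-22) (2) + mono (-27) (-22) (1) + mono (-31) (-21) (1) +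
    mono (-29) (-21) (3) + mono (-25) (-21) (1) + mono (-31) (-20) (1) +
    mono (-27) (-20) (3) + mono (-25) (-20) (2) + mono (-27) (-19) (4) +
    mono (-23) (-19) (2) + mono (-27) (-18) (1) + mono (-25) (-18) (2) +
    mono (-23) (-18) (4) + mono (-25) (-17) (4) + mono (-23) (-17) (1) +
    mono (-21) (-17) (3) + mono (-19) (-17) (1) + mono (-25) (-16) (4) +
    mono (-23) (-16) (2) + mono (-21) (-16) (6) + mono (-17) (-16) (1) +
    mono (-23) (-15) (4) + mono (-21) (-15) (5) + mono (-19) (-15) (3) +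
    mono (-17) (-15) (2) + mono (-23) (-14) (1) + mono (-21) (-14) (1) +
    mono (-19) (-14) (8) + mono (-17) (-14) (1) + mono (-15) (-14) (1) +
    mono (-21) (-13) (3) + mono (-19) (-13) (6) + mono (-17) (-13) (3) +
    mono (-15) (-13) (4) + mono (-21) (-12) (1) + mono (-19) (-12) (2) +
    mono (-17) (-12) (9) + mono (-15) (-12) (5) + mono (-13) (-12) (2) +
    mono (-17) (-11) (7) + mono (-15) (-11) (4) + mono (-13) (-11) (7) +
    mono (-17) (-10) (3) + mono (-15) (-10) (7) + mono (-13) (-10) (7) +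
    mono (-11) (-10) (2) + mono (-9) (-10) (1) + mono (-15) (-9) (8) +
    mono (-13) (-9) (6) + mono (-11) (-9) (9) + mono (-9) (-9) (1) +
    mono (-15) (-8) (3) + mono (-13) (-8) (5) + mono (-11) (-8) (13) +
    mono (-9) (-8) (4) + mono (-7) (-8) (2) + mono (-13) (-7) (5) +
    mono (-11) (-7) (8) + mono (-9) (-7) (9) + mono (-7) (-7) (5) +
    mono (-5) (-7) (1) + mono (-11) (-6) (5) + mono (-9) (-6) (13) +
    mono (-7) (-6) (6) + mono (-5) (-6) (4) + mono (-11) (-5) (1) +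
    mono (-9) (-5) (8) + mono (-7) (-5) (11) + mono (-5) (-5) (8) +
    mono (-3) (-5) (1) + mono (-9) (-4) (2) + mono (-7) (-4) (12) +
    mono (-5) (-4) (10) + mono (-3) (-4) (6) + mono (-7) (-3) (7) +
    mono (-5) (-3) (9) + mono (-3) (-3) (12) + mono (-1) (-3) (2) +
    mono (-5) (-2) (9) + mono (-3) (-2) (12) + mono (-1) (-2) (8) +
    mono (1) (-2) (1) + mono (-5) (-1) (3) + mono (-3) (-1) (7) +
    mono (-1) (-1) (15) + mono (1) (-1) (5) + mono (3) (-1) (1) +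
    mono (-3) (0) (3) + mono (-1) (0) (14) + mono (1) (0) (10) +
    mono (3) (0) (6) + mono (-3) (1) (1) + mono (-1) (1) (5) +
    mono (1) (1) (11) + mono (3) (1) (10) + mono (5) (1) (2) +
    mono (-1) (2) (1) + mono (1) (2) (8) + mono (3) (2) (10) +
    mono (5) (2) (8) + mono (1) (3) (2) + mono (3) (3) (7) +
    mono (5) (3) (10) + mono (7) (3) (5) + mono (3) (4) (4) +
    mono (5) (4) (7) + mono (7) (4) (6) + mono (9) (4) (3) +
    mono (3) (5) (1) + mono (9) (5) (5) + mono (5) (5) (4) +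
    mono (7) (5) (8) + mono (5) (6) (2) + mono (7) (6) (5) +
    mono (9) (6) (7) + mono (11) (6) (4) + mono (7) (7) (1) +
    mono (9) (7) (5) + mono (11) (7) (4) + mono (13) (7) (3) +
    mono (9) (8) (2) + mono (11) (8) (4) + mono (13) (8) (3) +
    mono (11) (9) (3) + mono (13) (9) (4) + mono (15) (9) (3) +
    mono (11) (10) (1) + mono (13) (10) (1) + mono (15) (10) (3) +
    mono (17) (10) (2) + mono (13) (11) (1) + mono (15) (11) (2) +
    mono (17) (11) (1) + mono (13) (12) (1) + mono (17) (12) (2) +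
    mono (19) (12) (1) + mono (17) (13) (2) + mono (21) (13) (1) +
    mono (17) (14) (1) + mono (19) (14) (1) + mono (21) (14) (1) +
    mono (19) (15) (1) + mono (21) (15) (1) + mono (23) (15) (1) +
    mono (23) (16) (1) + mono (23) (17) (1) + mono (27) (18) (1)

/-- The quotient polynomial `f₂`. -/
noncomputable def F2 : L2 :=
    mono (-45) (-32) 1 +
    mono (-39) (-29) 1 +
    mono (-37) (-27) 1 +
    mono (-37) (-26) 1 +
    mono (-35) (-25) 1 +
    mono (-35) (-24) 1 +
    mono (-33) (-23) 1 +
    mono (-33) (-22) 1 +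
    mono (-31) (-24) 1 +
    mono (-31) (-23) 1 +
    mono (-31) (-21) 1 +
    mono (-31) (-20) 1 +
    mono (-29) (-22) 1 +
    mono (-29) (-21) 2 +
    mono (-27) (-20) 2 +
    mono (-27) (-19) 3 +
    mono (-27) (-18) 1 +
    mono (-25) (-18) 2 +
    mono (-25) (-17) 4 +
    mono (-25) (-16) 4 +
    mono (-23) (-18) 1 +
    mono (-23) (-16) 2 +
    mono (-23) (-15) 4 +
    mono (-23) (-14) 1 +
    mono (-21) (-17) 1 +
    mono (-21) (-16) 2 +
    mono (-21) (-15) 1 +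
    mono (-21) (-14) 1 +
    mono (-21) (-13) 3 +
    mono (-21) (-12) 1 +
    mono (-19) (-15) 1 +
    mono (-19) (-14) 4 +
    mono (-19) (-13) 5 +
    mono (-19) (-12) 2 +
    mono (-17) (-13) 2 +
    mono (-17) (-12) 6 +
    mono (-17) (-11) 6 +
    mono (-17) (-10) 3 +
    mono (-15) (-11) 2 +
    mono (-15) (-10) 7 +
    mono (-15) (-9) 8 +
    mono (-15) (-8) 3 +
    mono (-13) (-11) 1 +
    mono (-13) (-10) 1 +
    mono (-13) (-9) 3 +
    mono (-13) (-8) 5 +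
    mono (-13) (-7) 5 +
    mono (-11) (-9) 2 +
    mono (-11) (-8) 5 +
    mono (-11) (-7) 5 +
    mono (-11) (-6) 5 +
    mono (-11) (-5) 1 +
    mono (-9) (-8) 1 +
    mono (-9) (-7) 4 +
    mono (-9) (-6) 8 +
    mono (-9) (-5) 8 +
    mono (-9) (-4) 2 +
    mono (-7) (-6) 1 +
    mono (-7) (-5) 6 +
    mono (-7) (-4) 11 +
    mono (-7) (-3) 7 +
    mono (-5) (-4) 2 +
    mono (-5) (-3) 7 +
    mono (-5) (-2) 9 +
    mono (-5) (-1) 3 +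
    mono (-3) (-3) 1 +
    mono (-3) (-2) 5 +
    mono (-3) (-1) 7 +
    mono (-3) 0 3 +
    mono (-3) 1 1 +
    mono (-1) (-2) 1 +
    mono (-1) (-1) 6 +
    mono (-1) 0 10 +
    mono (-1) 1 5 +
    mono (-1) 2 1 +
    mono 1 0 2 +
    mono 1 1 8 +
    mono 1 2 7 +
    mono 1 3 2 +
    mono 3 2 5 +
    mono 3 3 6 +
    mono 3 4 4 +
    mono 3 5 1 +
    mono 5 3 3 +
    mono 5 4 5 +
    mono 5 5 4 +
    mono 5 6 2 +
    mono 7 5 4 +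
    mono 7 6 4 +
    mono 7 7 1 +
    mono 9 6 3 +
    mono 9 7 3 +
    mono 9 8 2 +
    mono 11 8 3 +
    mono 11 9 3 +
    mono 11 10 1 +
    mono 13 9 2 +
    mono 13 10 1 +
    mono 13 11 1 +
    mono 13 12 1 +
    mono 15 11 1 +
    mono 17 12 1 +
    mono 17 13 1 +
    mono 17 14 1 +
    mono 19 14 1 +
    mono 19 15 1 +
    mono 23 17 1

lemma mono_smul (j r c : ℤ) : mono j r c = c • Q j r := by
  simp [mono, Q, Finsupp.smul_single]

lemma mono_mul_Q41 (j r c : ℤ) : mono j r c * Q 4 1 = mono (j + 4) (r + 1) c := by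
  simp [mono, Q, AddMonoidAlgebra.single_mul_single, Prod.mk_add_mk]

lemma nn_add {f g : L2} (hf : IsNonneg f) (hg : IsNonneg g) : IsNonneg (f + g) := by
  intro m
  exact add_nonneg (hf m) (hg m)

lemma nn_mono (j r c : ℤ) (h : 0 ≤ c) : IsNonneg (mono j r c) := by
  intro m
  simp only [mono, AddMonoidAlgebra.single]
  rw [Finsupp.single_apply]
  split <;> simp [h]

set_option maxRecDepth 4000 in
lemma F2_nonneg : IsNonneg F2 := by
  unfold F2
  repeat' apply nn_add
  all_goals exact nn_mono _ _ _ (by norm_num)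

lemma key : KhK2 - (Q 1 0 + Q (-1) 0) = F2 * (1 + Q 4 1) := by
  rw [mul_add, mul_one]
  unfold KhK2 F2
  simp only [add_mul, mono_mul_Q41]
  norm_num
  simp only [mono_smul]
  module

/-- `Kh(K₂) - (q + q^{-1})` is divisible by `1 + q^4 t`, with quotient `f₂` having non-negative
coefficients; hence `Kh(K₂)` admits a `1`-decomposition with `s = 0` and only `f₂` nonzero. -/
theorem KhK2_divisible : ∃ f₂ : L2,
    KhK2 - (Q 1 0 + Q (-1) 0) = f₂ * (1 + Q 4 1) ∧
    IsNonneg f₂ ∧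
    OneDecomp KhK2 0 (fun k => if k = 2 then f₂ else 0) := by
  refine ⟨F2, key, F2_nonneg, ?_, ?_, ?_, ?_⟩
  · exact Set.Finite.subset (Set.finite_singleton 2) (by
      intro k hk
      simp only [Function.mem_support] at hk
      rw [Set.mem_singleton_iff]
      by_contra h
      simp [h] at hk)
  · intro k
    by_cases h : k = 2
    · simpa [h] using F2_nonneg
    · simp [h]
      intro m
      simp
  · intro k hk
    have : k ≠ 2 := by omega
    simp [this]
  · have hs : ∑ᶠ k : ℕ, (if k = 2 then F2 else 0) * (1 + Q (2 * (k : ℤ)) 1)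
        = F2 * (1 + Q 4 1) := by
      rw [finsum_eq_single _ 2]
      · norm_num
      · intro k hk
        simp [hk]
    rw [hs]
    have h1 : Q 0 0 = (1 : L2) := rfl
    rw [h1, one_mul, ← key]
    ring
end
end

section
/- The group presented by ⟨x, y | x y x = y x y, x⁴ = y⁵⟩ is the trivial group. -/
/-- The relator `x y x (y x y)⁻¹`. -/
def relAC1 : FreeGroup (Fin 2) :=
  (FreeGroup.of 0 * FreeGroup.of 1 * FreeGroup.of 0) *
    (FreeGroup.of 1 * FreeGroup.of 0 * FreeGroup.of 1)⁻¹

/-- The relator `x⁴ y⁻⁵`. -/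
def relAC2 : FreeGroup (Fin 2) := (FreeGroup.of 0) ^ 4 * ((FreeGroup.of 1) ^ 5)⁻¹

/-- The group `⟨x, y ∣ x y x = y x y, x⁴ = y⁵⟩` is trivial. -/
theorem presented_group_trivial :
    Subsingleton (PresentedGroup ({relAC1, relAC2} : Set (FreeGroup (Fin 2)))) := by
  set rels : Set (FreeGroup (Fin 2)) := {relAC1, relAC2} with hrels
  let G := PresentedGroup rels
  let a : G := PresentedGroup.of 0
  let b : G := PresentedGroup.of 1
  have hrel : ∀ r ∈ rels, (QuotientGroup.mk r : G) = 1 := fun r hr =>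
    (QuotientGroup.eq_one_iff r).mpr (Subgroup.subset_normalClosure hr)
  have h1' : (QuotientGroup.mk relAC1 : G) = 1 := hrel _ (Or.inl rfl)
  have h2' : (QuotientGroup.mk relAC2 : G) = 1 := hrel _ (Or.inr rfl)
  rw [relAC1] at h1'
  rw [relAC2] at h2'
  have h1 : a * b * a = b * a * b := by
    have := h1'
    rw [QuotientGroup.mk_mul, QuotientGroup.mk_inv, mul_inv_eq_one] at this
    simp only [QuotientGroup.mk_mul] at this
    exact this
  have h2 : a ^ 4 = b ^ 5 := by
    have := h2'
    rw [QuotientGroup.mk_mul, QuotientGroup.mk_inv, mul_inv_eq_one] at this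
    simp only [QuotientGroup.mk_pow] at this
    exact this
  -- conjugation: (a*b) * a * (a*b)⁻¹ = b
  have hc : (a * b) * a * (a * b)⁻¹ = b := by
    rw [mul_inv_eq_iff_eq_mul]
    calc a * b * a = b * a * b := h1
    _ = b * (a * b) := by rw [mul_assoc]
  -- b^5 = a^4 commutes with a*b
  have hcomm : (a * b) * b ^ 5 = b ^ 5 * (a * b) := by
    have hba : b ^ 5 * a = a * b ^ 5 := by
      rw [← h2, ← pow_succ, ← pow_succ']
    calc (a * b) * b ^ 5 = a * (b * b ^ 5) := by rw [mul_assoc]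
    _ = a * (b ^ 5 * b) := by rw [← pow_succ, ← pow_succ']
    _ = (a * b ^ 5) * b := by rw [mul_assoc]
    _ = (b ^ 5 * a) * b := by rw [hba]
    _ = b ^ 5 * (a * b) := by rw [mul_assoc]
  have hb4 : b ^ 4 = b ^ 5 := by
    calc b ^ 4 = ((a * b) * a * (a * b)⁻¹) ^ 4 := by rw [hc]
    _ = (a * b) * a ^ 4 * (a * b)⁻¹ := by rw [conj_pow]
    _ = (a * b) * b ^ 5 * (a * b)⁻¹ := by rw [h2]
    _ = b ^ 5 * (a * b) * (a * b)⁻¹ := by rw [hcomm]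
    _ = b ^ 5 := by group
  have hb : b = 1 := by
    have : b ^ 4 * b = b ^ 4 * 1 := by rw [mul_one, ← pow_succ]; exact hb4.symm
    exact mul_left_cancel this
  have ha : a = 1 := by
    have : a * a = a * 1 := by
      have := h1
      rw [hb, mul_one, one_mul, mul_one] at this
      simpa using this
    exact mul_left_cancel this
  constructor
  intro x y
  have key : ∀ g : G, g = 1 := by
    intro g
    obtain ⟨w, rfl⟩ := QuotientGroup.mk_surjective g
    induction w using FreeGroup.induction_on with
    | C1 => rfl
    | of i =>
        fin_cases i
        · exact ha
        · exact hb
    | inv_of i h => rw [QuotientGroup.mk_inv, h]; exact inv_one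
    | mul u v hu hv => rw [QuotientGroup.mk_mul, hu, hv]; exact one_mul _
  rw [key x, key y]
end
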